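/- arXiv:2212.07604 — 4 statements merged into one kernel-verified Lean document; each statement's English description precedes it below -/
import Mathlib

section
/- Let n and m be positive integers with n ≥ m + 3, and suppose every unordered pair of distinct elements of a set of n objects is assigned to one of m bins (i.e., there is a function f from 2-element subsets of Fin n to Fin m). Then there exist two disjoint 2-element subsets assigned to the same bin: there are a, b, c, d in Fin n with {a,b} ∩ {c,d} = ∅ and f {a,b} = f {c,d}. -/
open Finset

lemma classify {m : ℕ} {α : Type} [DecidableEq α] [Fintype α] [Nonempty α]
    (f : {S : Finset α // S.card = 2} → Fin m)
    (hf : ∀ S T, f S = f T → (S.1 ∩ T.1).Nonempty) (c : Fin m) :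
    (∃ v : α, ∀ e, f e = c → v ∈ e.1) ∨
    (∃ t : Finset α, t.card = 3 ∧ ∀ e, f e = c → e.1 ⊆ t) := by
  by_cases h : ∃ v : α, ∀ e, f e = c → v ∈ e.1
  · exact Or.inl h
  push_neg at h
  right
  obtain ⟨v0⟩ := ‹Nonempty α›
  obtain ⟨e1, hc1, -⟩ := h v0
  obtain ⟨a, b, hab, h1⟩ := Finset.card_eq_two.mp e1.2
  obtain ⟨e2, hc2, ha2⟩ := h a
  have hb2 : b ∈ e2.1 := by
    obtain ⟨w, hw⟩ := hf e1 e2 (hc1.trans hc2.symm)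
    rw [Finset.mem_inter, h1] at hw
    rcases hw with ⟨hw1, hw2⟩
    rcases Finset.mem_insert.mp hw1 with rfl | hw1
    · exact absurd hw2 ha2
    · rwa [Finset.mem_singleton.mp hw1] at hw2
  obtain ⟨u, hu, he2⟩ : ∃ u, b ≠ u ∧ e2.1 = {b, u} := by
    obtain ⟨p, q, hpq, h2⟩ := Finset.card_eq_two.mp e2.2
    rw [h2] at hb2
    rcases Finset.mem_insert.mp hb2 with rfl | hb2
    · exact ⟨q, hpq, h2⟩
    · obtain rfl := Finset.mem_singleton.mp hb2
      exact ⟨p, hpq.symm, h2.trans (Finset.pair_comm p b)⟩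
  have hax : a ≠ u := by
    rintro rfl; exact ha2 (by rw [he2]; simp)
  obtain ⟨e3, hc3, hb3⟩ := h b
  have ha3 : a ∈ e3.1 := by
    obtain ⟨w, hw⟩ := hf e1 e3 (hc1.trans hc3.symm)
    rw [Finset.mem_inter, h1] at hw
    rcases hw with ⟨hw1, hw2⟩
    rcases Finset.mem_insert.mp hw1 with rfl | hw1
    · exact hw2
    · rw [Finset.mem_singleton.mp hw1] at hw2; exact absurd hw2 hb3
  have hx3 : u ∈ e3.1 := by
    obtain ⟨w, hw⟩ := hf e2 e3 (hc2.trans hc3.symm)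
    rw [Finset.mem_inter, he2] at hw
    rcases hw with ⟨hw1, hw2⟩
    rcases Finset.mem_insert.mp hw1 with rfl | hw1
    · exact absurd hw2 hb3
    · rwa [Finset.mem_singleton.mp hw1] at hw2
  refine ⟨{a, b, u}, Finset.card_eq_three.mpr ⟨a, b, u, hab, hax, hu, rfl⟩, ?_⟩
  intro e4 hc4
  intro w hw
  by_contra hwt
  obtain ⟨z, hwz, he4⟩ : ∃ z, w ≠ z ∧ e4.1 = {w, z} := by
    obtain ⟨p, q, hpq, h4⟩ := Finset.card_eq_two.mp e4.2
    rw [h4] at hw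
    rcases Finset.mem_insert.mp hw with rfl | hw
    · exact ⟨q, hpq, h4⟩
    · obtain rfl := Finset.mem_singleton.mp hw
      exact ⟨p, hpq.symm, h4.trans (Finset.pair_comm p w)⟩
  have key : ∀ s : Finset α, (s ∩ e4.1).Nonempty → w ∉ s → z ∈ s := by
    intro s hs hws
    obtain ⟨p, hp⟩ := hs
    rw [Finset.mem_inter, he4] at hp
    rcases hp with ⟨hp1, hp2⟩
    rcases Finset.mem_insert.mp hp2 with rfl | hp2
    · exact absurd hp1 hws
    · rwa [← Finset.mem_singleton.mp hp2]
  have hw1 : w ∉ e1.1 := by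
    rw [h1]; intro hc; apply hwt
    rcases Finset.mem_insert.mp hc with rfl | hc <;> simp_all
  have hw2 : w ∉ e2.1 := by
    rw [he2]; intro hc; apply hwt
    rcases Finset.mem_insert.mp hc with rfl | hc <;> simp_all
  have hz1 := key e1.1 (hf e1 e4 (hc1.trans hc4.symm)) hw1
  have hz2 := key e2.1 (hf e2 e4 (hc2.trans hc4.symm)) hw2
  have hw3 : w ∉ e3.1 := by
    intro hc
    have hwa : w ≠ a ∧ w ≠ b ∧ w ≠ u := by
      simp only [Finset.mem_insert, Finset.mem_singleton, not_or] at hwt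
      exact hwt
    have hsub : ({a, u, w} : Finset α) ⊆ e3.1 := by
      intro p hp
      rcases Finset.mem_insert.mp hp with rfl | hp
      · exact ha3
      rcases Finset.mem_insert.mp hp with rfl | hp
      · exact hx3
      · rw [Finset.mem_singleton.mp hp]; exact hc
    have h3 := Finset.card_le_card hsub
    rw [e3.2, Finset.card_eq_three.mpr ⟨a, u, w, hax, hwa.1.symm, hwa.2.2.symm, rfl⟩] at h3
    omega
  have hz3 := key e3.1 (hf e3 e4 (hc3.trans hc4.symm)) hw3
  rw [h1] at hz1
  rcases Finset.mem_insert.mp hz1 with rfl | hz1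
  · exact ha2 hz2
  · rw [Finset.mem_singleton.mp hz1] at hz3; exact hb3 hz3

lemma key : ∀ (m : ℕ) (α : Type) [DecidableEq α] [Fintype α], m + 3 ≤ Fintype.card α →
    ∀ f : {S : Finset α // S.card = 2} → Fin m,
    (∀ S T, f S = f T → (S.1 ∩ T.1).Nonempty) → False := by
  intro m
  induction m with
  | zero =>
    intro α _ _ hcard f _
    have h2 : 2 ≤ (univ : Finset α).card := by rw [Finset.card_univ]; omega
    obtain ⟨t, -, ht⟩ := Finset.exists_subset_card_eq h2
    exact (f ⟨t, ht⟩).elim0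
  | succ m ih =>
    intro α _ _ hcard f hf
    have : Nonempty α := Fintype.card_pos_iff.mp (by omega)
    by_cases hstar : ∃ (c : Fin (m+1)) (v : α), ∀ e, f e = c → v ∈ e.1
    · obtain ⟨c, v, hv⟩ := hstar
      haveI : DecidablePred (fun x : α => x = v) := fun x => inferInstance
      have hβ : m + 3 ≤ Fintype.card {x : α // x ≠ v} := by
        have h1 : Fintype.card {x : α // x ≠ v} = Fintype.card α - Fintype.card {x : α // x = v} :=
          Fintype.card_subtype_compl _
        rw [Fintype.card_subtype_eq] at h1
        omega
      set ι : {x : α // x ≠ v} ↪ α := ⟨Subtype.val, Subtype.val_injective⟩ with hι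
      have hE : ∀ e : {S : Finset {x : α // x ≠ v} // S.card = 2}, (e.1.map ι).card = 2 := by
        intro e; rw [Finset.card_map]; exact e.2
      have hne : ∀ e : {S : Finset {x : α // x ≠ v} // S.card = 2},
          f ⟨e.1.map ι, hE e⟩ ≠ c := by
        intro e hc
        have := hv _ hc
        obtain ⟨x, -, hx⟩ := Finset.mem_map.mp this
        exact x.2 hx
      have hsome : ∀ e : {S : Finset {x : α // x ≠ v} // S.card = 2},
          (finSuccEquiv' c (f ⟨e.1.map ι, hE e⟩)).isSome := by
        intro e
        rw [← Option.ne_none_iff_isSome]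
        intro hn
        apply hne e
        have := (finSuccEquiv' c).injective (hn.trans (finSuccEquiv'_at c).symm)
        exact this
      set g : {S : Finset {x : α // x ≠ v} // S.card = 2} → Fin m :=
        fun e => (finSuccEquiv' c (f ⟨e.1.map ι, hE e⟩)).get (hsome e) with hg
      apply ih _ hβ g
      intro S T hST
      have : f ⟨S.1.map ι, hE S⟩ = f ⟨T.1.map ι, hE T⟩ := by
        apply (finSuccEquiv' c).injective
        rw [← Option.some_get (hsome S), ← Option.some_get (hsome T)]
        exact congrArg some hST
      have h2 := hf _ _ this
      simp only [← Finset.map_inter] at h2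
      exact (Finset.map_nonempty).mp h2
    · push_neg at hstar
      have htri : ∀ c : Fin (m+1), ∃ t : Finset α, t.card = 3 ∧ ∀ e, f e = c → e.1 ⊆ t := by
        intro c
        rcases classify f hf c with ⟨v, hv⟩ | h
        · exact absurd hv (by simpa using hstar c v)
        · exact h
      choose t ht using htri
      have hcount : (univ : Finset {S : Finset α // S.card = 2}).card =
          ∑ c : Fin (m+1), (univ.filter (fun e => f e = c)).card :=
        Finset.card_eq_sum_card_fiberwise (by simp)
      have hfib : ∀ c : Fin (m+1), (univ.filter (fun e => f e = c)).card ≤ 3 := by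
        intro c
        have hinj : ∀ e ∈ univ.filter (fun e => f e = c), (e : {S : Finset α // S.card = 2}).1 ∈
            (t c).powersetCard 2 := by
          intro e he
          rw [Finset.mem_filter] at he
          exact Finset.mem_powersetCard.mpr ⟨(ht c).2 e he.2, e.2⟩
        have := Finset.card_le_card_of_injOn _ hinj (fun x _ y _ h => Subtype.ext h)
        rwa [Finset.card_powersetCard, (ht c).1] at this
      have hsum : ∑ c : Fin (m+1), (univ.filter (fun e => f e = c)).card ≤ 3 * (m+1) := by
        calc ∑ c : Fin (m+1), (univ.filter (fun e => f e = c)).card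
            ≤ ∑ _c : Fin (m+1), 3 := Finset.sum_le_sum (fun c _ => hfib c)
          _ = 3 * (m+1) := by simp [mul_comm]
      have huniv : (univ : Finset {S : Finset α // S.card = 2}).card =
          (Fintype.card α).choose 2 := by
        rw [Finset.card_univ, Fintype.card_finset_len]
      have hle : (Fintype.card α).choose 2 ≤ 3 * (m+1) := by
        rw [← huniv, hcount]; exact hsum
      set n := Fintype.card α with hn
      rw [Nat.choose_two_right] at hle
      have h1 : n * (n-1) ≤ 2 * (3 * (m+1)) + 1 := by omega
      have h2 : (m+4) * (m+3) ≤ n * (n-1) := Nat.mul_le_mul (by omega) (by omega)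
      nlinarith

theorem stmt_0 (n m : ℕ) (hm : 0 < m) (hn : n ≥ m + 3)
    (f : {S : Finset (Fin n) // S.card = 2} → Fin m) :
    ∃ S T : {S : Finset (Fin n) // S.card = 2},
      S.1 ∩ T.1 = ∅ ∧ f S = f T := by
  by_contra h
  push_neg at h
  apply key m (Fin n) (by simp [Fintype.card_fin]; omega) f
  intro S T hST
  rw [Finset.nonempty_iff_ne_empty]
  exact fun he => (h S T he) hST
end

section
/- Suppose f assigns each 2-element subset of Fin (m+3) to one of m bins such that no two disjoint pairs get the same bin. Then the total number of pairs, C(m+3, 2), is at most (m+2) + (m+1) + ⋯ + 3 = C(m+3,2) − 3, a contradiction; equivalently, the sum over bins of the number of pairs in each bin is at most C(m+3,2) − 3 under the stated hypothesis, which is impossible since every pair lies in some bin. -/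
lemma pair_of_mem {α} [DecidableEq α] {s : Finset α} (h2 : s.card = 2) {b : α}
    (hb : b ∈ s) : ∃ d, d ≠ b ∧ s = {b, d} := by
  have h1 : (s.erase b).card = 1 := by
    rw [Finset.card_erase_of_mem hb, h2]
  obtain ⟨d, hd⟩ := Finset.card_eq_one.mp h1
  refine ⟨d, ?_, ?_⟩
  · have : d ∈ s.erase b := hd ▸ Finset.mem_singleton_self d
    exact Finset.ne_of_mem_erase this
  · rw [← Finset.insert_erase hb, hd]

theorem stmt_3 (m : ℕ)
    (f : {S : Finset (Fin (m + 3)) // S.card = 2} → Fin m)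
    (hf : ∀ S T : {S : Finset (Fin (m + 3)) // S.card = 2},
      S ≠ T → f S = f T → (S.1 ∩ T.1).Nonempty) :
    False := by
  induction m with
  | zero => exact (f ⟨{0, 1}, by decide⟩).elim0
  | succ m ih =>
    by_cases h : ∃ c v, ∀ S, f S = c → v ∈ S.1
    · obtain ⟨c, v, hc⟩ := h
      have hinj : Function.Injective v.succAbove := Fin.succAbove_right_injective
      set emb : Fin (m+3) ↪ Fin (m+1+3) := ⟨v.succAbove, hinj⟩ with hemb
      have hmap : ∀ S : {S : Finset (Fin (m+3)) // S.card = 2},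
          (S.1.map emb).card = 2 := fun S => by simp [S.2]
      have hne : ∀ S : {S : Finset (Fin (m+3)) // S.card = 2},
          f ⟨S.1.map emb, hmap S⟩ ≠ c := by
        intro S hSc
        have hv := hc _ hSc
        simp only [Finset.mem_map, hemb, Function.Embedding.coeFn_mk] at hv
        obtain ⟨x, _, hx⟩ := hv
        exact Fin.succAbove_ne v x hx
      have hsome : ∀ S : {S : Finset (Fin (m+3)) // S.card = 2},
          ((finSuccEquiv' c) (f ⟨S.1.map emb, hmap S⟩)).isSome := by
        intro S
        rw [Option.isSome_iff_ne_none]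
        intro hnone
        have : f ⟨S.1.map emb, hmap S⟩ = c := by
          have := congrArg (finSuccEquiv' c).symm hnone
          simpa [finSuccEquiv'_symm_none] using this
        exact hne S this
      refine ih (fun S => ((finSuccEquiv' c) (f ⟨S.1.map emb, hmap S⟩)).get (hsome S)) ?_
      intro S T hST heq
      have hopt : (finSuccEquiv' c) (f ⟨S.1.map emb, hmap S⟩)
          = (finSuccEquiv' c) (f ⟨T.1.map emb, hmap T⟩) := by
        rw [← Option.some_get (hsome S), ← Option.some_get (hsome T)]
        exact congrArg some heq
      have hfeq : f ⟨S.1.map emb, hmap S⟩ = f ⟨T.1.map emb, hmap T⟩ :=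
        (finSuccEquiv' c).injective hopt
      have hne' : (⟨S.1.map emb, hmap S⟩ : {S : Finset (Fin (m+1+3)) // S.card = 2})
          ≠ ⟨T.1.map emb, hmap T⟩ := by
        intro hEq
        exact hST (Subtype.ext (Finset.map_injective emb (congrArg Subtype.val hEq)))
      have hint := hf _ _ hne' hfeq
      simp only at hint
      rw [← Finset.map_inter] at hint
      exact Finset.map_nonempty.mp hint
    · push_neg at h
      -- h : ∀ c v, ∃ S, f S = c ∧ v ∉ S.1
      have key : ∀ c : Fin (m+1),
          (Finset.univ.filter (fun S => f S = c)).card ≤ 3 := by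
        intro c
        obtain ⟨P, hPc, _⟩ := h c 0
        obtain ⟨a, b, hab, hPab⟩ := Finset.card_eq_two.mp P.2
        obtain ⟨Q, hQc, hQa⟩ := h c a
        have haP : a ∈ P.1 := by rw [hPab]; simp
        have hbP : b ∈ P.1 := by rw [hPab]; simp
        have hQP : Q ≠ P := fun hEq => hQa (hEq ▸ haP)
        have hbQ : b ∈ Q.1 := by
          obtain ⟨x, hx⟩ := hf Q P hQP (hQc.trans hPc.symm)
          simp only [Finset.mem_inter, hPab, Finset.mem_insert, Finset.mem_singleton] at hx
          rcases hx.2 with h1 | h1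
          · exact absurd (h1 ▸ hx.1) hQa
          · exact h1 ▸ hx.1
        obtain ⟨d, hdb, hQbd⟩ := pair_of_mem Q.2 hbQ
        have hda : d ≠ a := fun hEq => hQa (hEq ▸ (by rw [hQbd]; simp : d ∈ Q.1))
        obtain ⟨R, hRc, hRb⟩ := h c b
        have hRP : R ≠ P := fun hEq => hRb (hEq ▸ hbP)
        have hRQ : R ≠ Q := fun hEq => hRb (hEq ▸ (by rw [hQbd]; simp : b ∈ Q.1))
        have haR : a ∈ R.1 := by
          obtain ⟨x, hx⟩ := hf R P hRP (hRc.trans hPc.symm)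
          simp only [Finset.mem_inter, hPab, Finset.mem_insert, Finset.mem_singleton] at hx
          rcases hx.2 with h1 | h1
          · exact h1 ▸ hx.1
          · exact absurd (h1 ▸ hx.1) hRb
        have hdR : d ∈ R.1 := by
          obtain ⟨x, hx⟩ := hf R Q hRQ (hRc.trans hQc.symm)
          simp only [Finset.mem_inter, hQbd, Finset.mem_insert, Finset.mem_singleton] at hx
          rcases hx.2 with h1 | h1
          · exact absurd (h1 ▸ hx.1) hRb
          · exact h1 ▸ hx.1
        have hRad : R.1 = {a, d} := by
          refine (Finset.eq_of_subset_of_card_le ?_ ?_).symm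
          · intro x hx
            simp only [Finset.mem_insert, Finset.mem_singleton] at hx
            rcases hx with rfl | rfl
            exacts [haR, hdR]
          · rw [R.2, Finset.card_insert_of_notMem (by simp [hda.symm]), Finset.card_singleton]
        -- every member of the fiber is a subset of {a, b, d}
        have hsub : ∀ S : {S : Finset (Fin (m+1+3)) // S.card = 2},
            f S = c → S.1 ⊆ ({a, b, d} : Finset _) := by
          intro S hSc x hxS
          by_contra hx
          simp only [Finset.mem_insert, Finset.mem_singleton, not_or] at hx
          obtain ⟨hxa, hxb, hxd⟩ := hx
          have hSP : S ≠ P := fun hEq => by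
            have := hEq ▸ hxS; rw [hPab] at this
            simp only [Finset.mem_insert, Finset.mem_singleton] at this; tauto
          have hSQ : S ≠ Q := fun hEq => by
            have := hEq ▸ hxS; rw [hQbd] at this
            simp only [Finset.mem_insert, Finset.mem_singleton] at this; tauto
          have hSR : S ≠ R := fun hEq => by
            have := hEq ▸ hxS; rw [hRad] at this
            simp only [Finset.mem_insert, Finset.mem_singleton] at this; tauto
          obtain ⟨y, hyx, hSxy⟩ := pair_of_mem S.2 hxS
          have hmem : ∀ T' : {S : Finset (Fin (m+1+3)) // S.card = 2}, S ≠ T' → f T' = c →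
              ∀ u w : Fin (m+1+3), T'.1 = {u, w} → u ≠ x → w ≠ x → y = u ∨ y = w := by
            intro T' hST' hT'c u w hT' hux hwx
            obtain ⟨z, hz⟩ := hf S T' hST' (hSc.trans hT'c.symm)
            simp only [Finset.mem_inter, hSxy, hT', Finset.mem_insert,
              Finset.mem_singleton] at hz
            obtain ⟨h1 | h1, h2⟩ := hz
            · subst h1
              rcases h2 with rfl | rfl
              · exact absurd rfl hux
              · exact absurd rfl hwx
            · subst h1; exact h2
          have h1 := hmem P hSP hPc a b hPab (Ne.symm hxa) (Ne.symm hxb)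
          have h2 := hmem Q hSQ hQc b d hQbd (Ne.symm hxb) (Ne.symm hxd)
          have h3 := hmem R hSR hRc a d hRad (Ne.symm hxa) (Ne.symm hxd)
          rcases h1 with rfl | rfl
          · rcases h2 with h2 | h2
            · exact hab h2
            · exact hda h2.symm
          · rcases h3 with h3 | h3
            · exact hab h3.symm
            · exact hdb h3.symm
        -- count
        have himg : (Finset.univ.filter (fun S => f S = c)).image (fun S => S.1)
            ⊆ ({a, b, d} : Finset (Fin (m+1+3))).powersetCard 2 := by
          intro s hs
          simp only [Finset.mem_image, Finset.mem_filter] at hs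
          obtain ⟨S, ⟨_, hSc⟩, rfl⟩ := hs
          rw [Finset.mem_powersetCard]
          exact ⟨hsub S hSc, S.2⟩
        have hcardimg := Finset.card_le_card himg
        rw [Finset.card_image_of_injective _ (fun S T hST => Subtype.ext hST)] at hcardimg
        have habd : ({a, b, d} : Finset (Fin (m+1+3))).card = 3 := by
          rw [Finset.card_insert_of_notMem (by simp [hab, hda.symm]),
            Finset.card_insert_of_notMem (by simp [hdb.symm]), Finset.card_singleton]
        rw [Finset.card_powersetCard, habd] at hcardimg
        simpa using hcardimg
      have htot : (Finset.univ : Finset {S : Finset (Fin (m+1+3)) // S.card = 2}).card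
          = ∑ c : Fin (m+1), (Finset.univ.filter (fun S => f S = c)).card :=
        Finset.card_eq_sum_card_fiberwise (fun x _ => Finset.mem_univ (f x))
      have hle : (Finset.univ : Finset {S : Finset (Fin (m+1+3)) // S.card = 2}).card
          ≤ 3 * (m+1) := by
        rw [htot]
        calc ∑ c : Fin (m+1), (Finset.univ.filter (fun S => f S = c)).card
            ≤ ∑ _c : Fin (m+1), 3 := Finset.sum_le_sum (fun c _ => key c)
          _ = 3 * (m+1) := by simp [mul_comm]
      have hcard : (Finset.univ : Finset {S : Finset (Fin (m+1+3)) // S.card = 2}).card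
          = (m+4).choose 2 := by
        rw [Finset.card_univ, Fintype.card_finset_len, Fintype.card_fin]
      rw [hcard, Nat.choose_two_right] at hle
      have e : m + 4 - 1 = m + 3 := rfl
      rw [e] at hle
      have heven : 2 ∣ (m+4) * (m+3) := by
        have h := (Nat.even_mul_succ_self (m+3)).two_dvd
        rwa [Nat.mul_comm] at h
      have h2 : (m+4) * (m+3) ≤ 2 * (3 * (m+1)) := by
        rw [← Nat.mul_div_cancel' heven]
        exact Nat.mul_le_mul_left 2 hle
      nlinarith [h2]
end

section
/- Let s and d be positive integers and let s_0, s_1, …, s_{d−1} be nonnegative integers with s_0 + s_1 + ⋯ + s_{d−1} = s. Then there exists a cyclic shift of the sequence, i.e., an index r, such that setting t_i = s_{(i+r) mod d}, one has t_0 + t_1 + ⋯ + t_{j−1} ≥ j·s/d for every j = 1, …, d. -/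
theorem stmt_4 (s d : ℕ) (hs : 0 < s) (hd : 0 < d) (f : ℕ → ℕ)
    (hsum : ∑ i ∈ Finset.range d, f i = s) :
    ∃ r : ℕ, ∀ j : ℕ, 1 ≤ j → j ≤ d →
      d * (∑ i ∈ Finset.range j, f ((i + r) % d)) ≥ j * s := by
  set F : ℕ → ℤ := fun n => ∑ i ∈ Finset.range n, (f (i % d) : ℤ) with hF
  set h : ℕ → ℤ := fun n => d * F n - n * s with hh
  have hFstep : ∀ n, F (n + 1) = F n + f (n % d) := fun n => Finset.sum_range_succ _ n
  have hFd : ∀ n, F (n + d) = F n + s := by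
    intro n
    induction n with
    | zero =>
      simp only [hF, Nat.zero_add, Finset.range_zero, Finset.sum_empty]
      rw [← hsum]
      push_cast
      rw [zero_add]
      exact Finset.sum_congr rfl fun i hi => by
        rw [Nat.mod_eq_of_lt (Finset.mem_range.mp hi)]
    | succ n ih =>
      have e : n + 1 + d = (n + d) + 1 := by ring
      rw [e, hFstep, ih, hFstep, Nat.add_mod_right]
      ring
  have hper : ∀ n, h (n + d) = h n := by
    intro n; simp only [hh, hFd]; push_cast; ring
  have hmod : ∀ n, h n = h (n % d) := by
    intro n
    conv_lhs => rw [← Nat.mod_add_div n d]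
    generalize n / d = k
    induction k with
    | zero => simp
    | succ k ih =>
      have e : n % d + d * (k + 1) = (n % d + d * k) + d := by ring
      rw [e, hper, ih]
  obtain ⟨r, hr, hrmin⟩ := Finset.exists_min_image (Finset.range d) h
    ⟨0, Finset.mem_range.mpr hd⟩
  refine ⟨r, fun j hj1 hjd => ?_⟩
  have hshift : ∀ j, F (r + j) = F r + ∑ i ∈ Finset.range j, (f ((i + r) % d) : ℤ) := by
    intro j
    induction j with
    | zero => simp
    | succ j ih =>
      rw [← Nat.add_assoc, hFstep, ih, Finset.sum_range_succ, Nat.add_comm j r]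
      ring
  have hge : h r ≤ h (r + j) := by
    rw [hmod (r + j)]
    exact hrmin _ (Finset.mem_range.mpr (Nat.mod_lt _ hd))
  have key : (j : ℤ) * s ≤ d * ∑ i ∈ Finset.range j, (f ((i + r) % d) : ℤ) := by
    have := hge
    simp only [hh, hshift j] at this
    push_cast at this ⊢
    linarith
  have : (j : ℤ) * s ≤ (d : ℤ) * ∑ i ∈ Finset.range j, (f ((i + r) % d) : ℕ) := by
    push_cast
    exact key
  exact_mod_cast this
end

section
/- Let K be a totally ramified extension of ℚ₂ with ramification degree e and uniformizer π, and let d = 2m with m odd. For 1 ≤ k < e, the element (1 + π^k)^d − 1 has valuation exactly 2k. -/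
/-- In the ring of integers 𝒪 of a totally ramified extension of ℚ₂ of
ramification degree e, with uniformizer π and 2 = u·π^e for a unit u, and
d = 2m with m odd: for 1 ≤ k < e the element (1 + π^k)^d − 1 has valuation
exactly 2k (it is divisible by π^{2k} but not by π^{2k+1}). -/
theorem stmt_13 (𝒪 : Type*) [CommRing 𝒪] [IsDomain 𝒪] [IsDiscreteValuationRing 𝒪]
    (π : 𝒪) (hπ : Irreducible π)
    (hres : ∀ x : 𝒪, π ∣ x ∨ π ∣ (x - 1))
    (e : ℕ) (u : 𝒪) (hu : IsUnit u) (h2 : (2 : 𝒪) = u * π ^ e)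
    (m : ℕ) (hm : Odd m)
    (k : ℕ) (hk1 : 1 ≤ k) (hke : k < e) :
    π ^ (2 * k) ∣ (1 + π ^ k) ^ (2 * m) - 1 ∧
    ¬ π ^ (2 * k + 1) ∣ (1 + π ^ k) ^ (2 * m) - 1 := by
  have hprime : Prime π := hπ.prime
  have hπ0 : π ≠ 0 := hprime.ne_zero
  set a : 𝒪 := 2 * π ^ k + π ^ (2 * k) with ha
  set w : 𝒪 := u * π ^ (e - k) + 1 with hw
  set s : 𝒪 := ∑ i ∈ Finset.range m, (1 + a) ^ i with hs
  have hpe : π ^ e = π ^ k * π ^ (e - k) := by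
    rw [← pow_add]; congr 1; omega
  have haw : a = π ^ (2 * k) * w := by
    rw [ha, hw, h2, hpe]; ring
  have hsq : (1 + π ^ k) ^ 2 = 1 + a := by rw [ha]; ring
  have key : (1 + π ^ k) ^ (2 * m) - 1 = π ^ (2 * k) * (w * s) := by
    have hgeo := geom_sum_mul (1 + a) m
    rw [add_sub_cancel_left] at hgeo
    rw [pow_mul, hsq, ← hgeo, ← hs, haw]; ring
  have hπa : π ∣ a := by
    rw [haw]
    exact dvd_mul_of_dvd_left (dvd_pow_self π (by omega)) w
  have hπ2 : π ∣ (2 : 𝒪) := by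
    rw [h2]
    exact Dvd.dvd.mul_left (dvd_pow_self π (by omega)) u
  have hsm : π ∣ s - (m : 𝒪) := by
    have hsum : s - (m : 𝒪) = ∑ i ∈ Finset.range m, ((1 + a) ^ i - 1) := by
      rw [Finset.sum_sub_distrib, Finset.sum_const, Finset.card_range]
      simp [hs]
    rw [hsum]
    refine Finset.dvd_sum fun i _ => hπa.trans ?_
    have := sub_dvd_pow_sub_pow (1 + a) 1 i
    simpa using this
  have hm1 : π ∣ (m : 𝒪) - 1 := by
    obtain ⟨j, hj⟩ := hm
    have : (m : 𝒪) - 1 = 2 * (j : 𝒪) := by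
      subst hj; push_cast; ring
    rw [this]
    exact hπ2.mul_right _
  have hπs : ¬ π ∣ s := by
    intro hdvd
    have h1 : π ∣ (1 : 𝒪) := by
      have := dvd_sub (dvd_sub hdvd hsm) hm1
      simpa using this
    exact hπ.not_isUnit (isUnit_of_dvd_one h1)
  have hπw : ¬ π ∣ w := by
    intro hdvd
    have hw1 : π ∣ w - 1 := by
      rw [hw, add_sub_cancel_right]
      exact Dvd.dvd.mul_left (dvd_pow_self π (by omega)) u
    have h1 : π ∣ (1 : 𝒪) := by
      have := dvd_sub hdvd hw1
      simpa using this
    exact hπ.not_isUnit (isUnit_of_dvd_one h1)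
  constructor
  · rw [key]; exact dvd_mul_right _ _
  · intro h
    rw [key, pow_succ] at h
    have hws : π ∣ w * s :=
      (mul_dvd_mul_iff_left (pow_ne_zero (2 * k) hπ0)).mp h
    rcases hprime.2.2 _ _ hws with h' | h'
    · exact hπw h'
    · exact hπs h'
end
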